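/- Let K, D, M, α, β, γ, ρ, σ, λ, n₀ be natural numbers and n : Fin λ → ℕ, and define m : ℕ → ℕ by m j = |{i : Fin λ | n i = j}|. Assume: 1 ≤ D; β = D + α; K = β·γ + ρ; λ ≤ γ; σ + n₀ ≤ ρ; for every i, 1 ≤ n i ≤ D; n₀ + Σ_i n i = D; σ + λ·α ≤ M; and D + M ≤ K. Then, as an identity of rational numbers, T₂ · P₁₃ = ( C(γ,λ) · (λ! / Π_{j=1}^{D} (m j)!) · C(ρ,n₀) · Π_i C(β, n i) )⁻¹, where T₂ = C(ρ−n₀, σ) · Π_i C(β − n i, α) · C(K−D−σ−λ·α, M−σ−λ·α), and P₁₃ = [ (Π_{j=1}^{D} (m j)!) · n₀! · (Π_i (n i)!) · (M−σ−λ·α)! · σ! · (α!)^λ · (γ−λ)! / (γ! · ρ! · (β!)^λ) ] · [ (K−D−M)! · (ρ−σ−n₀)! · (Π_i (β−α−n i)!) / (K−D−σ−λ·α)! ]. -/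

import Mathlib

open Finset Nat

/-- The identity `ℙ(W = W | N = N, Q = Q) = T₂ · P₁₃ = (number of placement patterns)⁻¹`
from the privacy proof of the Generalized Partition and Code protocol. -/
theorem stmt_11 (K D M α β γ ρ σ lam n₀ : ℕ) (n : Fin lam → ℕ)
    (m : ℕ → ℕ)
    (hm : ∀ j, m j = (Finset.univ.filter (fun i : Fin lam => n i = j)).card)
    (hD : 1 ≤ D) (hβ : β = D + α) (hK : K = β * γ + ρ) (hlam : lam ≤ γ)
    (hρ : σ + n₀ ≤ ρ) (hn : ∀ i, 1 ≤ n i ∧ n i ≤ D)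
    (hsum : n₀ + ∑ i, n i = D) (hM : σ + lam * α ≤ M) (hDMK : D + M ≤ K) :
    ((Nat.choose (ρ - n₀) σ : ℚ)
        * (∏ i : Fin lam, (Nat.choose (β - n i) α : ℚ))
        * (Nat.choose (K - D - σ - lam * α) (M - σ - lam * α) : ℚ))
      * ((((∏ j ∈ Finset.Icc 1 D, ((m j).factorial : ℚ)) * (n₀.factorial : ℚ)
            * (∏ i : Fin lam, ((n i).factorial : ℚ))
            * ((M - σ - lam * α).factorial : ℚ) * (σ.factorial : ℚ)
            * (α.factorial : ℚ) ^ lam * ((γ - lam).factorial : ℚ))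
          / ((γ.factorial : ℚ) * (ρ.factorial : ℚ) * (β.factorial : ℚ) ^ lam))
        * ((((K - D - M).factorial : ℚ) * ((ρ - σ - n₀).factorial : ℚ)
            * (∏ i : Fin lam, ((β - α - n i).factorial : ℚ)))
          / ((K - D - σ - lam * α).factorial : ℚ)))
      = ((Nat.choose γ lam : ℚ)
          * ((lam.factorial : ℚ) / ∏ j ∈ Finset.Icc 1 D, ((m j).factorial : ℚ))
          * (Nat.choose ρ n₀ : ℚ)
          * (∏ i : Fin lam, (Nat.choose β (n i) : ℚ)))⁻¹ := by
  have hfac : ∀ N : ℕ, ((N.factorial : ℚ)) ≠ 0 := fun N =>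
    Nat.cast_ne_zero.mpr (Nat.factorial_ne_zero N)
  have c1 : ((ρ - n₀).choose σ : ℚ)
      = ((ρ - n₀).factorial : ℚ) / ((σ.factorial : ℚ) * ((ρ - σ - n₀).factorial : ℚ)) := by
    rw [Nat.cast_choose ℚ (by omega : σ ≤ ρ - n₀)]
    have : ρ - n₀ - σ = ρ - σ - n₀ := by omega
    rw [this]
  have c3 : ((K - D - σ - lam * α).choose (M - σ - lam * α) : ℚ)
      = ((K - D - σ - lam * α).factorial : ℚ)
        / (((M - σ - lam * α).factorial : ℚ) * ((K - D - M).factorial : ℚ)) := by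
    rw [Nat.cast_choose ℚ (by omega : M - σ - lam * α ≤ K - D - σ - lam * α)]
    have : K - D - σ - lam * α - (M - σ - lam * α) = K - D - M := by omega
    rw [this]
  have c4 : (γ.choose lam : ℚ)
      = (γ.factorial : ℚ) / ((lam.factorial : ℚ) * ((γ - lam).factorial : ℚ)) :=
    Nat.cast_choose ℚ hlam
  have c5 : (ρ.choose n₀ : ℚ)
      = (ρ.factorial : ℚ) / ((n₀.factorial : ℚ) * ((ρ - n₀).factorial : ℚ)) :=
    Nat.cast_choose ℚ (by omega)
  have p1 : (∏ i : Fin lam, ((β - n i).choose α : ℚ))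
      = (∏ i : Fin lam, (((β - n i).factorial : ℚ)))
        / ((α.factorial : ℚ) ^ lam * ∏ i : Fin lam, ((β - α - n i).factorial : ℚ)) := by
    rw [show ((α.factorial : ℚ)) ^ lam = ∏ _i : Fin lam, (α.factorial : ℚ) by simp,
      ← Finset.prod_mul_distrib, ← Finset.prod_div_distrib]
    apply Finset.prod_congr rfl
    intro i _
    rw [Nat.cast_choose ℚ (by have := (hn i).2; omega : α ≤ β - n i)]
    have : β - n i - α = β - α - n i := by omega
    rw [this]
  have p2 : (∏ i : Fin lam, ((β.choose (n i) : ℚ)))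
      = ((β.factorial : ℚ)) ^ lam
        / ((∏ i : Fin lam, ((n i).factorial : ℚ)) * ∏ i : Fin lam, ((β - n i).factorial : ℚ)) := by
    rw [show ((β.factorial : ℚ)) ^ lam = ∏ _i : Fin lam, (β.factorial : ℚ) by simp,
      ← Finset.prod_mul_distrib, ← Finset.prod_div_distrib]
    apply Finset.prod_congr rfl
    intro i _
    rw [Nat.cast_choose ℚ (by have := (hn i).2; omega : n i ≤ β)]
  have hprodne : ∀ (f : Fin lam → ℕ), (∏ i : Fin lam, ((f i).factorial : ℚ)) ≠ 0 := by
    intro f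
    exact Finset.prod_ne_zero_iff.mpr fun i _ => hfac (f i)
  have hmne : (∏ j ∈ Finset.Icc 1 D, ((m j).factorial : ℚ)) ≠ 0 :=
    Finset.prod_ne_zero_iff.mpr fun j _ => hfac (m j)
  rw [c1, c3, c4, c5, p1, p2]
  have hpow : ((α.factorial : ℚ)) ^ lam ≠ 0 := pow_ne_zero _ (hfac α)
  have hpowβ : ((β.factorial : ℚ)) ^ lam ≠ 0 := pow_ne_zero _ (hfac β)
  field_simp
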